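/- For every n ≥ 1, α(G^{⊠n}) ≤ R(G)^n, where R(G) is the minimal rank of a matrix over a field K fitting G. -/

import Mathlib

/-- A matrix `M` over a field `K` *fits* a graph `G` if all diagonal entries are
nonzero and `M u v = 0` whenever `u ≠ v` are non-adjacent in `G`. -/
def Matrix.Fits {V K : Type*} [Fintype V] [Field K]
    (M : Matrix V V K) (G : SimpleGraph V) : Prop :=
  (∀ u, M u u ≠ 0) ∧ ∀ u v, u ≠ v → ¬ G.Adj u v → M u v = 0

/-- The independence number of a finite simple graph. -/
noncomputable def SimpleGraph.indepNum' {V : Type*} [Fintype V] (G : SimpleGraph V) : ℕ :=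
  sSup {n | ∃ s : Finset V, ((s : Set V).Pairwise fun u v => ¬ G.Adj u v) ∧ s.card = n}

/-- The `n`-fold strong power of a simple graph. -/
def SimpleGraph.strongPow {V : Type*} (G : SimpleGraph V) (n : ℕ) :
    SimpleGraph (Fin n → V) where
  Adj x y := x ≠ y ∧ ∀ i, x i = y i ∨ G.Adj (x i) (y i)
  symm := ⟨fun _ _ ⟨h, ha⟩ => ⟨h.symm, fun i => (ha i).imp Eq.symm SimpleGraph.Adj.symm⟩⟩
  loopless := ⟨fun _ h => h.1 rfl⟩

/-- The Haemers bound: the minimum rank, over the field `K`, of a matrix fitting `G`. -/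
noncomputable def haemersRank (K : Type*) [Field K] {V : Type*} [Fintype V]
    (G : SimpleGraph V) : ℕ :=
  sInf {r | ∃ M : Matrix V V K, M.Fits G ∧ M.rank = r}

open Matrix Module Submodule in
/-- Subadditivity of matrix rank. -/
lemma Matrix.rank_add_le_aux {m n K : Type*} [Fintype n] [Fintype m] [Field K]
    (A B : Matrix m n K) : (A + B).rank ≤ A.rank + B.rank := by
  have h : LinearMap.range (A + B).mulVecLin ≤
      LinearMap.range A.mulVecLin ⊔ LinearMap.range B.mulVecLin := by
    rw [Matrix.mulVecLin_add]
    rintro x ⟨y, rfl⟩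
    exact Submodule.mem_sup.2 ⟨A.mulVecLin y, ⟨y, rfl⟩, B.mulVecLin y, ⟨y, rfl⟩, rfl⟩
  calc (A + B).rank
      = finrank K (LinearMap.range (A + B).mulVecLin) := rfl
    _ ≤ finrank K (LinearMap.range A.mulVecLin ⊔ LinearMap.range B.mulVecLin : Submodule K _) :=
        Submodule.finrank_mono h
    _ ≤ _ := Submodule.finrank_add_le_finrank_add_finrank _ _

open Matrix in
/-- Rank of an outer product is at most one. -/
lemma Matrix.rank_vecMulVec_le_one {m n K : Type*} [Fintype n] [Fintype m] [Field K]
    (a : m → K) (b : n → K) : (Matrix.vecMulVec a b).rank ≤ 1 := by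
  rw [Matrix.vecMulVec_eq (Fin 1)]
  refine (Matrix.rank_mul_le_left _ _).trans ((Matrix.rank_le_card_width _).trans ?_)
  simp

open Matrix in
lemma Matrix.rank_sum_le_card {ι m n K : Type*} [Fintype n] [Fintype m] [Field K]
    (t : Finset ι) (N : ι → Matrix m n K) (h : ∀ i, (N i).rank ≤ 1) :
    (∑ i ∈ t, N i).rank ≤ t.card := by
  classical
  induction t using Finset.induction with
  | empty => simp [Matrix.rank_zero]
  | insert x t hx ih =>
    rw [Finset.sum_insert hx, Finset.card_insert_of_notMem hx]
    calc (N x + ∑ i ∈ t, N i).rank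
        ≤ (N x).rank + (∑ i ∈ t, N i).rank := Matrix.rank_add_le_aux _ _
      _ ≤ 1 + t.card := add_le_add (h x) ih
      _ = t.card + 1 := add_comm _ _

open Matrix Module Submodule in
/-- Any matrix is a sum of `rank` many outer products. -/
lemma Matrix.exists_rank_decomp {V K : Type*} [Fintype V] [Field K] (M : Matrix V V K) :
    ∃ a b : Fin M.rank → V → K, ∀ u v, M u v = ∑ k, a k u * b k v := by
  classical
  set W := LinearMap.range M.mulVecLin with hW
  have hmem : ∀ v, Mᵀ v ∈ W := by
    intro v
    rw [hW, Matrix.range_mulVecLin]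
    exact Submodule.subset_span ⟨v, rfl⟩
  have hfr : finrank K W = M.rank := rfl
  let c : Basis (Fin M.rank) K W := (Module.finBasis K W).reindex (finCongr hfr)
  refine ⟨fun k u => (c k : V → K) u, fun k v => c.repr ⟨Mᵀ v, hmem v⟩ k, fun u v => ?_⟩
  have hsum := c.sum_repr ⟨Mᵀ v, hmem v⟩
  have h2 : (Mᵀ v : V → K) = ∑ k, c.repr ⟨Mᵀ v, hmem v⟩ k • (c k : V → K) := by
    calc (Mᵀ v : V → K) = W.subtype ⟨Mᵀ v, hmem v⟩ := rfl
      _ = W.subtype (∑ k, c.repr ⟨Mᵀ v, hmem v⟩ k • c k) := by rw [hsum]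
      _ = ∑ k, c.repr ⟨Mᵀ v, hmem v⟩ k • (c k : V → K) := by
          rw [map_sum]; simp
  have h3 := congrFun h2 u
  simp only [Finset.sum_apply, Pi.smul_apply, smul_eq_mul] at h3
  calc M u v = Mᵀ v u := rfl
    _ = ∑ k, (c k : V → K) u * c.repr ⟨Mᵀ v, hmem v⟩ k := by
        rw [h3]; exact Finset.sum_congr rfl fun k _ => mul_comm _ _

open Matrix Module Submodule in
/-- An independent set is at most the rank of any fitting matrix. -/
lemma Matrix.card_le_rank_of_fits {W K : Type*} [Fintype W] [Field K]
    {H : SimpleGraph W} {M : Matrix W W K} (hM : M.Fits H) (s : Finset W)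
    (hs : (s : Set W).Pairwise fun u v => ¬ H.Adj u v) : s.card ≤ M.rank := by
  classical
  have hli : LinearIndependent K (fun x : s => M x) := by
    rw [Fintype.linearIndependent_iff]
    intro g hg y
    have h := congrFun hg (y : W)
    simp only [Finset.sum_apply, Pi.smul_apply, smul_eq_mul, Pi.zero_apply] at h
    have hz : ∀ x : s, x ≠ y → g x * M x y = 0 := by
      intro x hxy
      have hne : (x : W) ≠ (y : W) := fun h' => hxy (Subtype.ext h')
      rw [hM.2 x y hne (hs x.2 y.2 hne), mul_zero]
    rw [Fintype.sum_eq_single y hz] at h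
    exact (mul_eq_zero.mp h).resolve_right (hM.1 y)
  have hsub : Set.range (fun x : s => M x) ⊆ Set.range (fun x : W => M x) := by
    rintro _ ⟨x, rfl⟩; exact ⟨x, rfl⟩
  have hMt : Mᵀ.rank = finrank K (span K (Set.range fun x : W => M x)) := by
    rw [Matrix.rank_eq_finrank_span_cols]; rfl
  calc s.card = Fintype.card s := (Fintype.card_coe s).symm
    _ = finrank K (span K (Set.range fun x : s => M x)) := (finrank_span_eq_card hli).symm
    _ ≤ finrank K (span K (Set.range fun x : W => M x)) :=
        Submodule.finrank_mono (Submodule.span_mono hsub)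
    _ = Mᵀ.rank := hMt.symm
    _ = M.rank := Matrix.rank_transpose M

theorem indepNum_strongPow_le_haemersRank_pow {V : Type*} [Fintype V] [DecidableEq V]
    (K : Type*) [Field K] (G : SimpleGraph V) (n : ℕ) (hn : 1 ≤ n) :
    (G.strongPow n).indepNum' ≤ haemersRank K G ^ n := by
  classical
  have hSne : {r | ∃ M : Matrix V V K, M.Fits G ∧ M.rank = r}.Nonempty := by
    refine ⟨(1 : Matrix V V K).rank, 1, ⟨fun u => by simp, fun u v h _ => ?_⟩, rfl⟩
    simp [Matrix.one_apply, h]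
  obtain ⟨M, hM, hMr⟩ := Nat.sInf_mem hSne
  obtain ⟨a, b, hab⟩ := Matrix.exists_rank_decomp M
  set Mn : Matrix (Fin n → V) (Fin n → V) K :=
    Matrix.of fun x y => ∏ i, M (x i) (y i) with hMn
  have hfits : Mn.Fits (G.strongPow n) := by
    constructor
    · intro x
      simp only [hMn, Matrix.of_apply]
      exact Finset.prod_ne_zero_iff.2 fun i _ => hM.1 (x i)
    · intro x y hxy hadj
      have hadj' : ¬(x ≠ y ∧ ∀ i, x i = y i ∨ G.Adj (x i) (y i)) := hadj
      push_neg at hadj'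
      obtain ⟨i, hi1, hi2⟩ := hadj' hxy
      simp only [hMn, Matrix.of_apply]
      exact Finset.prod_eq_zero (Finset.mem_univ i) (hM.2 _ _ hi1 hi2)
  have hdec : Mn = ∑ f : Fin n → Fin M.rank,
      Matrix.vecMulVec (fun x : Fin n → V => ∏ i, a (f i) (x i))
        (fun y : Fin n → V => ∏ i, b (f i) (y i)) := by
    ext x y
    simp only [hMn, Matrix.of_apply, Matrix.sum_apply, Matrix.vecMulVec_apply]
    calc ∏ i, M (x i) (y i) = ∏ i, ∑ k, a k (x i) * b k (y i) :=
          Finset.prod_congr rfl fun i _ => hab (x i) (y i)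
      _ = ∑ f ∈ Fintype.piFinset (fun _ : Fin n => (Finset.univ : Finset (Fin M.rank))),
            ∏ i, a (f i) (x i) * b (f i) (y i) := Finset.prod_univ_sum _ _
      _ = ∑ f : Fin n → Fin M.rank, (∏ i, a (f i) (x i)) * ∏ i, b (f i) (y i) := by
          rw [Fintype.piFinset_univ]
          exact Finset.sum_congr rfl fun f _ => Finset.prod_mul_distrib
  have hrank : Mn.rank ≤ M.rank ^ n := by
    rw [hdec]
    have := Matrix.rank_sum_le_card (Finset.univ : Finset (Fin n → Fin M.rank))
      (fun f => Matrix.vecMulVec (fun x : Fin n → V => ∏ i, a (f i) (x i))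
        (fun y : Fin n → V => ∏ i, b (f i) (y i)))
      (fun f => Matrix.rank_vecMulVec_le_one _ _)
    simpa [Fintype.card_fun] using this
  have key : ∀ m ∈ {m | ∃ s : Finset (Fin n → V),
      ((s : Set (Fin n → V)).Pairwise fun u v => ¬ (G.strongPow n).Adj u v) ∧ s.card = m},
      m ≤ haemersRank K G ^ n := by
    rintro m ⟨s, hs, rfl⟩
    calc s.card ≤ Mn.rank := Matrix.card_le_rank_of_fits hfits s hs
      _ ≤ M.rank ^ n := hrank
      _ = haemersRank K G ^ n := congrArg (· ^ n) hMr
  exact csSup_le' key
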